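/- arXiv:2505.02544 — 8 statements merged into one kernel-verified Lean document; each statement's English description precedes it below -/
import Mathlib

section
/- Let a system of fundamental sequences on an ordinal Γ be nested (i.e. it is never the case for γ < β ≤ Γ and n > 1 that γ > β[n] > γ[n]). Let n > 1 and (n_i)_{i∈ω} be a sequence of natural numbers with n ≤ n_i for each i. Then for each ordinal α ≤ Γ there exists k ∈ ℕ such that α[n] = α[n_0][n_1]…[n_k]. -/
open Ordinal

/-- A system of fundamental sequences on `Γ`: to each ordinal `α ≤ Γ` we associate a
non-decreasing sequence `fs α n` with `sup {fs α n + 1 : n} = α` for `α ≠ 0`, and `fs 0 n = 0`. -/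
structure FSSystem (Γ : Ordinal) where
  fs : Ordinal → ℕ → Ordinal
  fs_zero : ∀ n, fs 0 n = 0
  mono : ∀ α, α ≤ Γ → Monotone (fs α)
  sup_eq : ∀ α, α ≤ Γ → α ≠ 0 → (⨆ n : ℕ, fs α n + 1) = α

/-- The system is nested: it is never the case, for `γ < β ≤ Γ` and `n > 1`,
that `γ > β[n] > γ[n]`. -/
def FSSystem.Nested {Γ : Ordinal} (S : FSSystem Γ) : Prop :=
  ∀ γ β (n : ℕ), γ < β → β ≤ Γ → 1 < n → ¬ (S.fs γ n < S.fs β n ∧ S.fs β n < γ)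

/-- Iterated evaluation `α[s_0][s_1]…[s_{m-1}]` along a list. -/
def FSSystem.evalL {Γ : Ordinal} (S : FSSystem Γ) (α : Ordinal) (s : List ℕ) : Ordinal :=
  s.foldl S.fs α

/-- In a nested system, if `n > 1` and `n ≤ n_i` for all `i`, then for each `α ≤ Γ` there is a
`k` with `α[n] = α[n_0][n_1]…[n_k]`. -/
theorem nested_sequence_lemma {Γ : Ordinal} (S : FSSystem Γ) (hN : S.Nested)
    (n : ℕ) (hn : 1 < n) (nseq : ℕ → ℕ) (hseq : ∀ i, n ≤ nseq i)
    (α : Ordinal) (hα : α ≤ Γ) :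
    ∃ k : ℕ, S.fs α n = S.evalL α ((List.range (k + 1)).map nseq) := by
  -- the iterated sequence
  let a : ℕ → Ordinal := fun i => Nat.rec α (fun i b => S.fs b (nseq i)) i
  have ha0 : a 0 = α := rfl
  have haS : ∀ i, a (i + 1) = S.fs (a i) (nseq i) := fun i => rfl
  -- fs β m < β for β ≠ 0
  have hlt : ∀ β, β ≤ Γ → β ≠ 0 → ∀ m, S.fs β m < β := by
    intro β hβ hβ0 m
    calc S.fs β m < S.fs β m + 1 := lt_add_one _
      _ ≤ ⨆ k : ℕ, S.fs β k + 1 := le_ciSup (Ordinal.bddAbove_range _) m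
      _ = β := S.sup_eq β hβ hβ0
  have hle : ∀ β, β ≤ Γ → ∀ m, S.fs β m ≤ β := by
    intro β hβ m
    rcases eq_or_ne β 0 with rfl | h
    · simp [S.fs_zero]
    · exact (hlt β hβ h m).le
  have ha_le : ∀ i, a i ≤ α := by
    intro i
    induction i with
    | zero => exact le_rfl
    | succ i ih => exact (hle (a i) (ih.trans hα) _).trans ih
  have haΓ : ∀ i, a i ≤ Γ := fun i => (ha_le i).trans hα
  -- evalL computes a
  have heval : ∀ k, S.evalL α ((List.range k).map nseq) = a k := by
    intro k
    induction k with
    | zero => rfl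
    | succ k ih =>
      rw [List.range_succ, List.map_append, FSSystem.evalL, List.foldl_append]
      simp only [List.map_cons, List.map_nil, List.foldl_cons, List.foldl_nil]
      rw [show List.foldl S.fs α (List.map nseq (List.range k)) = a k from ih, haS]
  by_contra hcon
  push_neg at hcon
  have hne : ∀ k, S.fs α n ≠ a (k + 1) := fun k h => hcon k (h.trans (heval (k + 1)).symm)
  -- fs α n < a (i+1) for all i
  have hstrict : ∀ i, S.fs α n < a (i + 1) := by
    intro i
    induction i with
    | zero =>
      refine lt_of_le_of_ne ?_ (hne 0)
      rw [haS 0, ha0]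
      exact S.mono α hα (hseq 0)
    | succ i ih =>
      refine lt_of_le_of_ne ?_ (hne (i + 1))
      rw [haS (i + 1)]
      rcases lt_or_eq_of_le (ha_le (i + 1)) with h | h
      · have hnest := hN (a (i + 1)) α n h hα hn
        have h1 : S.fs α n ≤ S.fs (a (i + 1)) n := by
          by_contra hh
          exact hnest ⟨not_le.1 hh, ih⟩
        exact h1.trans (S.mono _ (haΓ (i + 1)) (hseq (i + 1)))
      · rw [h]
        exact S.mono α hα (hseq (i + 1))
  have hdec : ∀ i, a (i + 2) < a (i + 1) := by
    intro i
    rw [haS (i + 1)]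
    refine hlt _ (haΓ (i + 1)) ?_ _
    intro h0
    exact absurd (hstrict i) (by rw [h0]; exact not_lt_zero)
  exact (RelEmbedding.natGT (fun i => a (i + 1)) hdec).not_wellFounded
    wellFounded_lt
end

section
/- Assume a nested system of fundamental sequences on Γ. Let s, t be finite subsets of ℕ (viewed as increasing sequences) with |s| ≤ |t| and 1 < t(i) ≤ s(i) for each i < |s|. Then α[t] ≤ α[s] for every ordinal α ≤ Γ. -/
open Ordinal

namespace FSSystem

variable {Γ : Ordinal} (S : FSSystem Γ)

lemma fs_lt_aux {α : Ordinal} (hα : α ≤ Γ) (h0 : α ≠ 0) (n : ℕ) : S.fs α n < α := by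
  have h := S.sup_eq α hα h0
  have h2 : S.fs α n + 1 ≤ α := (le_ciSup (Ordinal.bddAbove_range fun n => S.fs α n + 1) n).trans_eq h
  rw [Ordinal.add_one_eq_succ] at h2
  exact (Order.lt_succ _).trans_le h2

lemma fs_le_aux {α : Ordinal} (hα : α ≤ Γ) (n : ℕ) : S.fs α n ≤ α := by
  rcases eq_or_ne α 0 with rfl | h0
  · simp [S.fs_zero]
  · exact (S.fs_lt_aux hα h0 n).le

lemma evalL_le_self_aux {α : Ordinal} (hα : α ≤ Γ) (v : List ℕ) : S.evalL α v ≤ α := by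
  induction v generalizing α with
  | nil => exact le_rfl
  | cons k v ih =>
    have h1 : S.fs α k ≤ α := S.fs_le_aux hα k
    exact (ih (h1.trans hα)).trans h1

lemma evalL_zero_aux (v : List ℕ) : S.evalL 0 v = 0 := by
  induction v with
  | nil => rfl
  | cons k v ih => show S.evalL (S.fs 0 k) v = 0; rw [S.fs_zero]; exact ih

lemma main_aux (hN : S.Nested) :
    ∀ α, α ≤ Γ → ∀ (s t : List ℕ), s.Pairwise (· < ·) → t.Pairwise (· < ·) →
      ∀ (hlen : s.length ≤ t.length),
      (∀ i (hi : i < s.length),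
        1 < t.get ⟨i, lt_of_lt_of_le hi hlen⟩ ∧
          t.get ⟨i, lt_of_lt_of_le hi hlen⟩ ≤ s.get ⟨i, hi⟩) →
      S.evalL α t ≤ S.evalL α s := by
  intro α
  induction α using Ordinal.induction with
  | h α IH =>
  intro hα s t hs ht hlen hcomp
  rcases s with _ | ⟨s0, s'⟩
  · exact S.evalL_le_self_aux hα t
  rcases t with _ | ⟨t0, t'⟩
  · simp at hlen
  rcases eq_or_ne α 0 with rfl | hα0
  · simp [S.evalL_zero_aux]
  obtain ⟨ht0, hts0⟩ := hcomp 0 (Nat.succ_pos _)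
  have ht0 : 1 < t0 := ht0
  have hts0 : t0 ≤ s0 := hts0
  have ht'mem : ∀ x ∈ t', t0 < x := (List.pairwise_cons.1 ht).1
  have hγΓ : S.fs α t0 ≤ Γ := (S.fs_le_aux hα t0).trans hα
  have inner : ∀ (v : List ℕ), v.Pairwise (· < ·) → (∀ k ∈ v, t0 < k) →
      ∀ (hvlen : v.length ≤ t'.length),
      (∀ i (hi : i < v.length), t'.get ⟨i, lt_of_lt_of_le hi hvlen⟩ ≤ v.get ⟨i, hi⟩) →
      ∀ c, c ≤ Γ → c < α → S.fs α t0 ≤ c → S.evalL (S.fs α t0) t' ≤ S.evalL c v := by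
    intro v
    induction v with
    | nil =>
      intro _ _ _ _ c hcΓ _ hγc
      exact (S.evalL_le_self_aux hγΓ t').trans hγc
    | cons k v' ihv =>
      intro hv hvgt hvlen hvcomp c hcΓ hcα hγc
      rcases eq_or_lt_of_le hγc with heq | hlt
      · rw [← heq]
        refine IH (S.fs α t0) (heq ▸ hcα) hγΓ (k :: v') t' hv
          (List.pairwise_cons.1 ht).2 hvlen (fun i hi => ?_)
        exact ⟨ht0.trans (ht'mem _ (List.get_mem t' _)), hvcomp i hi⟩
      · have hn := hN c α t0 hcα hα ht0
        have h1 : S.fs α t0 ≤ S.fs c t0 := by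
          by_contra h
          exact hn ⟨not_le.1 h, hlt⟩
        have hk : t0 ≤ k := (hvgt k (List.mem_cons_self)).le
        have h2 : S.fs α t0 ≤ S.fs c k := h1.trans (S.mono c hcΓ hk)
        have hckΓ : S.fs c k ≤ Γ := (S.fs_le_aux hcΓ k).trans hcΓ
        have hckα : S.fs c k < α := (S.fs_le_aux hcΓ k).trans_lt hcα
        have hvlen' : v'.length ≤ t'.length := Nat.le_of_succ_le hvlen
        show S.evalL (S.fs α t0) t' ≤ S.evalL (S.fs c k) v'
        refine ihv (List.pairwise_cons.1 hv).2
          (fun x hx => hvgt x (List.mem_cons_of_mem _ hx)) hvlen'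
          (fun i hi => ?_) (S.fs c k) hckΓ hckα h2
        have hmono := hv.sortedLT.strictMono_get
          (show (⟨i, Nat.lt_succ_of_lt hi⟩ : Fin (k :: v').length) < ⟨i + 1, Nat.succ_lt_succ hi⟩
            from Fin.mk_lt_mk.2 (Nat.lt_succ_self i))
        exact le_of_lt (lt_of_le_of_lt (hvcomp i (Nat.lt_succ_of_lt hi)) hmono)
  have hβΓ : S.fs α s0 ≤ Γ := (S.fs_le_aux hα s0).trans hα
  have hβα : S.fs α s0 < α := S.fs_lt_aux hα hα0 s0
  have hγβ : S.fs α t0 ≤ S.fs α s0 := S.mono α hα hts0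
  show S.evalL (S.fs α t0) t' ≤ S.evalL (S.fs α s0) s'
  exact inner s' (List.pairwise_cons.1 hs).2
    (fun k hk => lt_of_le_of_lt hts0 ((List.pairwise_cons.1 hs).1 k hk))
    (Nat.le_of_succ_le_succ hlen)
    (fun i hi => (hcomp (i + 1) (Nat.succ_lt_succ hi)).2)
    (S.fs α s0) hβΓ hβα hγβ

end FSSystem

/-- In a nested system, if `s, t` are increasing finite sequences with `|s| ≤ |t|` and
`1 < t(i) ≤ s(i)` for all `i < |s|`, then `α[t] ≤ α[s]` for every `α ≤ Γ`. -/
theorem nested_subset_lemma {Γ : Ordinal} (S : FSSystem Γ) (hN : S.Nested)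
    (s t : List ℕ) (hs : s.Pairwise (· < ·)) (ht : t.Pairwise (· < ·))
    (hlen : s.length ≤ t.length)
    (hcomp : ∀ i (hi : i < s.length),
      1 < t.get ⟨i, lt_of_lt_of_le hi hlen⟩ ∧ t.get ⟨i, lt_of_lt_of_le hi hlen⟩ ≤ s.get ⟨i, hi⟩)
    (α : Ordinal) (hα : α ≤ Γ) :
    S.evalL α t ≤ S.evalL α s :=
  S.main_aux hN α hα s t hs ht hlen hcomp
end

section
/- Assume a nested system of fundamental sequences on Γ and let s ⊆ t be finite sets of naturals with min t > 1. If s is α-large for some ordinal α ≤ Γ, then t is α-large too. Moreover, if s ⊊ t and t is α-size, then s is α-small. -/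
open Ordinal

/-- Evaluation `α[s]` along the increasing enumeration of a finite set `s`. -/
def FSSystem.evalF {Γ : Ordinal} (S : FSSystem Γ) (α : Ordinal) (s : Finset ℕ) : Ordinal :=
  S.evalL α (s.sort (· ≤ ·))

/-- `s` is `α`-large when `α[s] = 0`. -/
def FSSystem.Large {Γ : Ordinal} (S : FSSystem Γ) (α : Ordinal) (s : Finset ℕ) : Prop :=
  S.evalF α s = 0

/-- `s` is `α`-small when `α[s] > 0`. -/
def FSSystem.Small {Γ : Ordinal} (S : FSSystem Γ) (α : Ordinal) (s : Finset ℕ) : Prop :=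
  0 < S.evalF α s

/-- `s` is `α`-size when `s` is `α`-large but `s ∖ {max s}` is `α`-small. -/
def FSSystem.Size {Γ : Ordinal} (S : FSSystem Γ) (α : Ordinal) (s : Finset ℕ) : Prop :=
  S.evalL α (s.sort (· ≤ ·)) = 0 ∧ 0 < S.evalL α ((s.sort (· ≤ ·)).dropLast)

/-! ### Auxiliary lemmas -/

lemma sublist_insert_aux {ls lt : List ℕ} (h : ls.Sublist lt) :
    ls ≠ lt → ∃ u₁ x u₂, ls = u₁ ++ u₂ ∧ (u₁ ++ x :: u₂).Sublist lt := by
  induction h with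
  | slnil => intro hne; exact absurd rfl hne
  | @cons l₁ l₂ a h IH =>
    intro _
    exact ⟨[], a, l₁, rfl, List.cons_sublist_cons.mpr h⟩
  | @cons_cons l₁ l₂ a h IH =>
    intro hne
    rcases eq_or_ne l₁ l₂ with rfl | hne'
    · exact absurd rfl hne
    · obtain ⟨u₁, x, u₂, h1, h2⟩ := IH hne'
      exact ⟨a :: u₁, x, u₂, by rw [h1]; rfl, List.cons_sublist_cons.mpr h2⟩

namespace FSSystem

variable {Γ : Ordinal} (S : FSSystem Γ)

lemma fs_lt {β : Ordinal} (hβ : β ≤ Γ) (hβ0 : β ≠ 0) (n : ℕ) : S.fs β n < β := by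
  have h1 : S.fs β n + 1 ≤ β := by
    conv_rhs => rw [← S.sup_eq β hβ hβ0]
    exact Ordinal.le_iSup (fun n => S.fs β n + 1) n
  exact Order.add_one_le_iff.mp h1

lemma fs_le {β : Ordinal} (hβ : β ≤ Γ) (n : ℕ) : S.fs β n ≤ β := by
  rcases eq_or_ne β 0 with rfl | h
  · simp [S.fs_zero]
  · exact (S.fs_lt hβ h n).le

lemma fs_le_gamma {β : Ordinal} (hβ : β ≤ Γ) (n : ℕ) : S.fs β n ≤ Γ :=
  (S.fs_le hβ n).trans hβ

lemma evalL_le {β : Ordinal} (hβ : β ≤ Γ) (l : List ℕ) : S.evalL β l ≤ β := by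
  induction l generalizing β with
  | nil => exact le_rfl
  | cons m l ih =>
    exact le_trans (ih (S.fs_le_gamma hβ m)) (S.fs_le hβ m)

lemma evalL_le_gamma {β : Ordinal} (hβ : β ≤ Γ) (l : List ℕ) : S.evalL β l ≤ Γ :=
  (S.evalL_le hβ l).trans hβ

lemma iter_zero (n : ℕ) : ∀ j, (fun x => S.fs x n)^[j] (0 : Ordinal) = 0 := by
  intro j
  induction j with
  | zero => rfl
  | succ j ih => rw [Function.iterate_succ_apply', ih]; exact S.fs_zero n

lemma iter_le {β : Ordinal} (hβ : β ≤ Γ) (n : ℕ) : ∀ j, (fun x => S.fs x n)^[j] β ≤ β := by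
  intro j
  induction j with
  | zero => exact le_rfl
  | succ j ih =>
    rw [Function.iterate_succ_apply']
    exact le_trans (S.fs_le (ih.trans hβ) n) ih

/-- Key consequence of nestedness: for `k ≤ m`, `fs δ k` is an iterate of `fs · m`
starting from `fs δ m`. -/
lemma iter_reach (hN : S.Nested) {δ : Ordinal} (hδ : δ ≤ Γ) {k m : ℕ}
    (hk : 1 < k) (hkm : k ≤ m) :
    ∃ i, (fun x => S.fs x m)^[i] (S.fs δ m) = S.fs δ k := by
  rcases eq_or_ne δ 0 with rfl | hδ0
  · exact ⟨0, by simp [S.fs_zero]⟩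
  have key : ∀ x, S.fs δ k ≤ x → x < δ → ∃ i, (fun y => S.fs y m)^[i] x = S.fs δ k := by
    intro x
    induction x using Ordinal.induction with
    | _ x IH =>
      intro hax hxδ
      rcases eq_or_lt_of_le hax with heq | hlt
      · exact ⟨0, heq.symm⟩
      have hxΓ : x ≤ Γ := hxδ.le.trans hδ
      have hx0 : x ≠ 0 := (lt_of_le_of_lt (zero_le (a := S.fs δ k)) hlt).ne'
      have h1 : ¬ (S.fs x k < S.fs δ k ∧ S.fs δ k < x) := hN x δ k hxδ hδ hk
      have h2 : S.fs δ k ≤ S.fs x k := by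
        by_contra h
        exact h1 ⟨lt_of_not_ge h, hlt⟩
      have h3 : S.fs δ k ≤ S.fs x m := h2.trans (S.mono x hxΓ hkm)
      have h4 : S.fs x m < x := S.fs_lt hxΓ hx0 m
      obtain ⟨i, hi⟩ := IH _ h4 h3 (h4.trans hxδ)
      exact ⟨i + 1, by rw [Function.iterate_succ_apply]; exact hi⟩
  exact key (S.fs δ m) (S.mono δ hδ hkm) (S.fs_lt hδ hδ0 m)

/-- Transfer of largeness to `fs(·,n)`-iterates of the base, along sorted lists with
entries `≥ n`. -/
lemma transfer (hN : S.Nested) :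
    ∀ (l : List ℕ), l.Pairwise (· ≤ ·) → (∀ e ∈ l, 1 < e) →
    ∀ (β : Ordinal), β ≤ Γ → ∀ (n : ℕ), 1 < n → (∀ e ∈ l, n ≤ e) →
    S.evalL β l = 0 → ∀ j, S.evalL ((fun x => S.fs x n)^[j] β) l = 0 := by
  intro l
  induction l with
  | nil =>
    intro _ _ β hβ n hn _ h0 j
    have hβ0 : β = 0 := h0
    subst hβ0
    exact S.iter_zero n j
  | cons m l' IH =>
    intro hsort helem β hβ n hn hmin h0 j
    have hm1 : 1 < m := helem m (List.mem_cons_self)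
    have hml' : ∀ e ∈ l', m ≤ e := fun e he => List.rel_of_pairwise_cons hsort he
    have hnm : n ≤ m := hmin m (List.mem_cons_self)
    have hsort' : l'.Pairwise (· ≤ ·) := List.pairwise_cons.mp hsort |>.2
    have helem' : ∀ e ∈ l', 1 < e := fun e he => helem e (List.mem_cons_of_mem _ he)
    induction j with
    | zero => exact h0
    | succ j ihj =>
      have hγ : (fun x => S.fs x n)^[j] β ≤ Γ := (S.iter_le hβ n j).trans hβ
      set γ := (fun x => S.fs x n)^[j] β with hγdef
      obtain ⟨i, hi⟩ := S.iter_reach hN hγ hn hnm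
      have h2 : (fun y => S.fs y m)^[i + 1] (S.fs γ m) = S.fs (S.fs γ n) m := by
        rw [Function.iterate_succ_apply', hi]
      have h3 : S.evalL ((fun y => S.fs y m)^[i + 1] (S.fs γ m)) l' = 0 :=
        IH hsort' helem' (S.fs γ m) (S.fs_le_gamma hγ m) m hm1 hml' ihj (i + 1)
      show S.evalL (S.fs ((fun x => S.fs x n)^[j + 1] β) m) l' = 0
      rw [Function.iterate_succ_apply', ← hγdef, ← h2]
      exact h3

/-- Largeness transfers from a sublist to the full sorted list. -/
lemma sublist_large (hN : S.Nested) {ls lt : List ℕ} (h : ls.Sublist lt) :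
    lt.Pairwise (· ≤ ·) → (∀ e ∈ lt, 1 < e) → ∀ β, β ≤ Γ →
    S.evalL β ls = 0 → S.evalL β lt = 0 := by
  induction h with
  | slnil => intro _ _ β _ h0; exact h0
  | @cons l₁ l₂ a h IH =>
    intro hsort helem β hβ h0
    have hsort' : l₂.Pairwise (· ≤ ·) := List.pairwise_cons.mp hsort |>.2
    have helem' : ∀ e ∈ l₂, 1 < e := fun e he => helem e (List.mem_cons_of_mem _ he)
    have h1 : S.evalL β l₂ = 0 := IH hsort' helem' β hβ h0
    have h2 := S.transfer hN l₂ hsort' helem' β hβ a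
      (helem a (List.mem_cons_self)) (fun e he => List.rel_of_pairwise_cons hsort he) h1 1
    rw [Function.iterate_one] at h2
    exact h2
  | @cons_cons l₁ l₂ a h IH =>
    intro hsort helem β hβ h0
    have hsort' : l₂.Pairwise (· ≤ ·) := List.pairwise_cons.mp hsort |>.2
    have helem' : ∀ e ∈ l₂, 1 < e := fun e he => helem e (List.mem_cons_of_mem _ he)
    exact IH hsort' helem' (S.fs β a) (S.fs_le_gamma hβ a) h0

/-- Replacement lemma: if `υ` evaluated along `v ++ [M]` is zero, then applying first an
index `x ≤ min v` (with `x ≤ M`) and then `v` also gives zero. -/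
lemma repl (hN : S.Nested) :
    ∀ (v : List ℕ), v.Pairwise (· ≤ ·) → ∀ (M : ℕ), (∀ e ∈ v, e ≤ M) →
    ∀ (x : ℕ), 1 < x → (∀ e ∈ v, x ≤ e) → x ≤ M →
    ∀ (υ : Ordinal), υ ≤ Γ → S.fs (S.evalL υ v) M = 0 → S.evalL (S.fs υ x) v = 0 := by
  intro v
  induction v with
  | nil =>
    intro _ M _ x hx _ hxM υ hυ h0
    have h1 : S.fs υ x ≤ S.fs υ M := S.mono υ hυ hxM
    exact nonpos_iff_eq_zero.mp (h0 ▸ h1)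
  | cons m v' IH =>
    intro hsort M hM x hx hxv hxM υ hυ h0
    have hxm : x ≤ m := hxv m (List.mem_cons_self)
    have hm1 : 1 < m := lt_of_lt_of_le hx hxm
    have hmv' : ∀ e ∈ v', m ≤ e := fun e he => List.rel_of_pairwise_cons hsort he
    have hmM : m ≤ M := hM m (List.mem_cons_self)
    have hsort' : v'.Pairwise (· ≤ ·) := List.pairwise_cons.mp hsort |>.2
    have hM' : ∀ e ∈ v', e ≤ M := fun e he => hM e (List.mem_cons_of_mem _ he)
    have helem' : ∀ e ∈ v', 1 < e := fun e he => lt_of_lt_of_le hm1 (hmv' e he)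
    have h1 : S.evalL (S.fs (S.fs υ m) m) v' = 0 :=
      IH hsort' M hM' m hm1 hmv' hmM (S.fs υ m) (S.fs_le_gamma hυ m) h0
    obtain ⟨i, hi⟩ := S.iter_reach hN hυ hx hxm
    have h2 : (fun y => S.fs y m)^[i + 1] (S.fs υ m) = S.fs (S.fs υ x) m := by
      rw [Function.iterate_succ_apply', hi]
    have h3 : (fun y => S.fs y m)^[i + 1] (S.fs υ m)
        = (fun y => S.fs y m)^[i] (S.fs (S.fs υ m) m) := by
      rw [Function.iterate_succ_apply]
    have h4 : S.evalL ((fun y => S.fs y m)^[i] (S.fs (S.fs υ m) m)) v' = 0 :=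
      S.transfer hN v' hsort' helem' (S.fs (S.fs υ m) m)
        (S.fs_le_gamma (S.fs_le_gamma hυ m) m) m hm1 hmv' h1 i
    show S.evalL (S.fs (S.fs υ x) m) v' = 0
    rw [← h2, h3]
    exact h4

end FSSystem

/-- In a nested system, for finite sets `s ⊆ t` with `min t > 1`: if `s` is `α`-large then so
is `t`; and if `s ⊊ t` and `t` is `α`-size then `s` is `α`-small. -/
theorem nested_large_mono {Γ : Ordinal} (S : FSSystem Γ) (hN : S.Nested)
    (s t : Finset ℕ) (hst : s ⊆ t) (hmin : ∀ m ∈ t, 1 < m)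
    (α : Ordinal) (hα : α ≤ Γ) :
    (S.Large α s → S.Large α t) ∧ (s ⊂ t → S.Size α t → S.Small α s) := by
  classical
  set ls := s.sort (· ≤ ·) with hls
  set lt := t.sort (· ≤ ·) with hlt
  have hsubset : ls ⊆ lt := fun a ha =>
    (Finset.mem_sort _).mpr (hst ((Finset.mem_sort _).mp ha))
  have hsl : ls.Sublist lt :=
    List.sublist_of_subperm_of_pairwise
      (List.subperm_of_subset (Finset.sort_nodup s _) hsubset)
      (Finset.pairwise_sort s _) (Finset.pairwise_sort t _)
  have hsortt : lt.Pairwise (· ≤ ·) := Finset.pairwise_sort t _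
  have hsortlt : lt.Pairwise (· < ·) := (Finset.sortedLT_sort t).pairwise
  have helem : ∀ e ∈ lt, 1 < e := fun e he => hmin e ((Finset.mem_sort _).mp he)
  constructor
  · intro hL
    exact S.sublist_large hN hsl hsortt helem α hα hL
  · intro hss hSize
    obtain ⟨hSize1, hSize2⟩ := hSize
    rcases eq_or_ne (S.evalL α ls) 0 with h0 | h0
    swap
    · exact pos_iff_ne_zero.mpr h0
    exfalso
    have hne : ls ≠ lt := by
      intro he
      refine hss.ne (Finset.ext fun a => ?_)
      rw [← Finset.mem_sort (α := ℕ) (· ≤ ·) (s := s), ← Finset.mem_sort (α := ℕ) (· ≤ ·) (s := t),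
        ← hls, ← hlt, he]
    have htne : lt ≠ [] := by
      intro he
      apply hne
      rw [he]
      exact List.sublist_nil.mp (he ▸ hsl)
    obtain ⟨M, l₀, hM, hdrop⟩ : ∃ M l₀, lt = l₀ ++ [M] ∧ lt.dropLast = l₀ := by
      refine ⟨lt.getLast htne, lt.dropLast, (List.dropLast_append_getLast htne).symm, rfl⟩
    have hl₀lt : l₀.Sublist lt := by rw [hM]; exact List.sublist_append_left _ _
    have hl₀sorted : l₀.Pairwise (· ≤ ·) := hsortt.sublist hl₀lt
    have hl₀elem : ∀ e ∈ l₀, 1 < e := fun e he => helem e (hl₀lt.subset he)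
    have hl₀M : ∀ e ∈ l₀, e < M := by
      intro e he
      have hp := hsortlt
      rw [hM] at hp
      exact (List.pairwise_append.mp hp).2.2 e he M (List.mem_singleton_self _)
    rw [hM] at hsl
    obtain ⟨l₁, l₂, hsplit, h₁, h₂⟩ := List.sublist_append_iff.mp hsl
    have hgoal : S.evalL α l₀ = 0 := by
      rcases List.sublist_singleton.mp h₂ with rfl | rfl
      · -- ls = l₁, ls <+ l₀
        rw [List.append_nil] at hsplit
        subst hsplit
        exact S.sublist_large hN h₁ hl₀sorted hl₀elem α hα h0
      · -- ls = l₁ ++ [M], l₁ <+ l₀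
        have hne' : l₁ ≠ l₀ := by
          intro he
          apply hne
          rw [hsplit, he, hM]
        obtain ⟨u₁, x, u₂, hu, hw⟩ := sublist_insert_aux h₁ hne'
        have hwl₀ : (u₁ ++ x :: u₂).Sublist l₀ := hw
        have hwlt : (u₁ ++ x :: u₂).Sublist lt := hwl₀.trans hl₀lt
        have hwsorted : (u₁ ++ x :: u₂).Pairwise (· ≤ ·) := hsortt.sublist hwlt
        have hwelem : ∀ e ∈ u₁ ++ x :: u₂, 1 < e := fun e he => helem e (hwlt.subset he)
        have hx1 : 1 < x := hwelem x (by simp)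
        have hxu₂ : ∀ e ∈ u₂, x ≤ e := by
          intro e he
          have := (List.pairwise_append.mp hwsorted).2.1
          exact List.rel_of_pairwise_cons this he
        have hu₂sorted : u₂.Pairwise (· ≤ ·) :=
          (List.pairwise_cons.mp (List.pairwise_append.mp hwsorted).2.1).2
        have hu₂M : ∀ e ∈ u₂, e ≤ M := fun e he =>
          (hl₀M e (hwl₀.subset (by simp [he]))).le
        have hxM : x ≤ M := (hl₀M x (hwl₀.subset (by simp))).le
        have hu₁Γ : S.evalL α u₁ ≤ Γ := S.evalL_le_gamma hα u₁
        have h0' : S.fs (S.evalL (S.evalL α u₁) u₂) M = 0 := by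
          have hls2 : ls = (u₁ ++ u₂) ++ [M] := by rw [hsplit, hu]
          rw [hls2] at h0
          simpa [FSSystem.evalL, List.foldl_append] using h0
        have hrepl : S.evalL (S.fs (S.evalL α u₁) x) u₂ = 0 :=
          S.repl hN u₂ hu₂sorted M hu₂M x hx1 hxu₂ hxM (S.evalL α u₁) hu₁Γ h0'
        have hw0 : S.evalL α (u₁ ++ x :: u₂) = 0 := by
          simpa [FSSystem.evalL, List.foldl_append] using hrepl
        exact S.sublist_large hN hwl₀ hl₀sorted hl₀elem α hα hw0
    rw [hdrop, hgoal] at hSize2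
    exact lt_irrefl _ hSize2
end

section
/- Assume a nested system of fundamental sequences on Γ. If β ≤ α ≤ Γ, there exists a natural number n > 1 such that α ⇒_n β, meaning β is obtained from α by finitely many (possibly zero) applications of the map δ ↦ δ[n]. -/
open Ordinal

/-- `α ⇒_n β`: `β` is obtained from `α` by finitely many applications of `δ ↦ δ[n]`. -/
def FSSystem.Reaches {Γ : Ordinal} (S : FSSystem Γ) (n : ℕ) (α β : Ordinal) : Prop :=
  ∃ k : ℕ, (fun δ => S.fs δ n)^[k] α = β

section Aux

variable {Γ : Ordinal} (S : FSSystem Γ)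

lemma FSSystem.fs_lt_s3 {α : Ordinal} (hα : α ≤ Γ) (h0 : α ≠ 0) (n : ℕ) : S.fs α n < α := by
  have h := S.sup_eq α hα h0
  have h1 : S.fs α n + 1 ≤ ⨆ m : ℕ, S.fs α m + 1 :=
    le_ciSup (Ordinal.bddAbove_range _) n
  rw [h] at h1
  exact lt_of_lt_of_le (lt_add_one _) h1

lemma FSSystem.fs_le_s3 {α : Ordinal} (hα : α ≤ Γ) (n : ℕ) : S.fs α n ≤ α := by
  rcases eq_or_ne α 0 with rfl | h0
  · simp [S.fs_zero]
  · exact (S.fs_lt_s3 hα h0 n).le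

lemma FSSystem.fs_le_gamma_s3 {α : Ordinal} (hα : α ≤ Γ) (n : ℕ) : S.fs α n ≤ Γ :=
  le_trans (S.fs_le_s3 hα n) hα

lemma FSSystem.reaches_refl (n : ℕ) (α : Ordinal) : S.Reaches n α α := ⟨0, rfl⟩

lemma FSSystem.reaches_trans {n : ℕ} {α β γ : Ordinal}
    (h1 : S.Reaches n α β) (h2 : S.Reaches n β γ) : S.Reaches n α γ := by
  obtain ⟨k1, hk1⟩ := h1
  obtain ⟨k2, hk2⟩ := h2
  exact ⟨k1 + k2, by rw [add_comm, Function.iterate_add_apply, hk1, hk2]⟩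

lemma FSSystem.reaches_step {n : ℕ} {α β : Ordinal}
    (h : S.Reaches n (S.fs α n) β) : S.Reaches n α β := by
  obtain ⟨k, hk⟩ := h
  exact ⟨k + 1, by rw [Function.iterate_add_apply]; exact hk⟩

/-- Descent lemma: if the map `δ ↦ δ[m]` never jumps below `c` on `(c, α]`,
then the `m`-orbit of `α` reaches `c`. -/
lemma FSSystem.descent (m : ℕ) :
    ∀ α : Ordinal, α ≤ Γ → ∀ c : Ordinal, c ≤ α →
      (∀ δ, c < δ → δ ≤ α → c ≤ S.fs δ m) → S.Reaches m α c := by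
  intro α
  induction α using Ordinal.induction with
  | h α IH =>
    intro hα c hc hstep
    rcases eq_or_lt_of_le hc with rfl | hlt
    · exact S.reaches_refl m c
    · have h0 : α ≠ 0 := fun h => by simp [h] at hlt
      have hfs : S.fs α m < α := S.fs_lt_s3 hα h0 m
      have hc' : c ≤ S.fs α m := hstep α hlt le_rfl
      have := IH (S.fs α m) hfs (S.fs_le_gamma_s3 hα m) c hc'
        (fun δ hδ1 hδ2 => hstep δ hδ1 (le_trans hδ2 hfs.le))
      exact S.reaches_step this

/-- Key lemma: for `1 < n ≤ m`, the `m`-orbit of `α` reaches `α[n]`. -/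
lemma FSSystem.reaches_fs (hN : S.Nested) {n m : ℕ} (hn : 1 < n) (hnm : n ≤ m)
    {α : Ordinal} (hα : α ≤ Γ) : S.Reaches m α (S.fs α n) := by
  apply S.descent m α hα _ (S.fs_le_s3 hα n)
  intro δ hδ1 hδ2
  rcases eq_or_lt_of_le hδ2 with rfl | hδlt
  · exact S.mono δ hα hnm
  · -- δ < α, fs α n < δ; nested gives fs α n ≤ fs δ n ≤ fs δ m
    have hnest := hN δ α n hδlt hα hn
    push_neg at hnest
    have h1 : S.fs α n ≤ S.fs δ n :=
      le_of_not_gt fun h => absurd (hnest h) (not_le.mpr hδ1)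
    exact le_trans h1 (S.mono δ (le_trans hδlt.le hα) hnm)

/-- Reachability is monotone in `n`. -/
lemma FSSystem.reaches_mono (hN : S.Nested) {n m : ℕ} (hn : 1 < n) (hnm : n ≤ m)
    {α β : Ordinal} (hα : α ≤ Γ) (h : S.Reaches n α β) : S.Reaches m α β := by
  obtain ⟨k, hk⟩ := h
  induction k generalizing α with
  | zero => exact hk ▸ S.reaches_refl m α
  | succ k IH =>
    rw [Function.iterate_succ_apply] at hk
    exact S.reaches_trans (S.reaches_fs hN hn hnm hα)
      (IH (S.fs_le_gamma_s3 hα n) hk)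

end Aux

/-- In a nested system, if `β ≤ α ≤ Γ` then there exists `n > 1` with `α ⇒_n β`. -/
theorem nested_canonical_norm {Γ : Ordinal} (S : FSSystem Γ) (hN : S.Nested)
    (α β : Ordinal) (hβα : β ≤ α) (hα : α ≤ Γ) :
    ∃ n : ℕ, 1 < n ∧ S.Reaches n α β := by
  induction α using Ordinal.induction generalizing β with
  | h α IH =>
    rcases eq_or_lt_of_le hβα with rfl | hlt
    · exact ⟨2, one_lt_two, S.reaches_refl 2 β⟩
    · have h0 : α ≠ 0 := fun h => by
        subst h; exact absurd hlt (by simp)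
      -- choose n > 1 with β ≤ fs α n
      have hsup := S.sup_eq α hα h0
      have hβs : β < ⨆ m : ℕ, S.fs α m + 1 := by rw [hsup]; exact hlt
      obtain ⟨n0, hn0⟩ := (lt_ciSup_iff (Ordinal.bddAbove_range _)).mp hβs
      set n := max n0 2 with hn_def
      have hn2 : 1 < n := lt_of_lt_of_le one_lt_two (le_max_right _ _)
      have hβfs : β ≤ S.fs α n := by
        have : β ≤ S.fs α n0 := Order.lt_add_one_iff.mp hn0
        exact le_trans this (S.mono α hα (le_max_left _ _))
      have hfslt : S.fs α n < α := S.fs_lt_s3 hα h0 n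
      obtain ⟨m, hm2, hmr⟩ := IH (S.fs α n) hfslt β hβfs (S.fs_le_gamma_s3 hα n)
      refine ⟨max n m, lt_of_lt_of_le hn2 (le_max_left _ _), ?_⟩
      exact S.reaches_trans
        (S.reaches_mono hN hn2 (le_max_left _ _) hα (S.reaches_step (S.reaches_refl n (S.fs α n))))
        (S.reaches_mono hN hm2 (le_max_right _ _) (S.fs_le_gamma_s3 hα n) hmr)
end

section
/- Every smooth block is a barrier, i.e. if B ⊆ [ℕ]^{<ω} is a block such that for all s, t ∈ B with |s| < |t| there exists i < |s| with s(i) < t(i), then for all s, t ∈ B it is not the case that s ⊊ t (as sets). -/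
open Ordinal

/-- The base of a family of finite increasing sequences: all naturals occurring in it. -/
def sbase (B : Set (List ℕ)) : Set ℕ := {n | ∃ s ∈ B, n ∈ s}

/-- A block: a non-degenerate front. Finite subsets of `ℕ` are identified with their increasing
enumerations. Every infinite subset of the base (given by its increasing enumeration `f`) has an
initial segment in `B`, and `B` is prefix-free. -/
structure IsBlock (B : Set (List ℕ)) : Prop where
  sorted : ∀ s ∈ B, s.Pairwise (· < ·)
  base_infinite : (sbase B).Infinite
  prefix_exists : ∀ f : ℕ → ℕ, StrictMono f → (∀ i, f i ∈ sbase B) →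
    ∃ k, (List.range k).map f ∈ B
  prefix_free : ∀ s ∈ B, ∀ t ∈ B, s <+: t → s = t

/-- Smoothness: for `s, t ∈ B` with `|s| < |t|` there is `i < |s|` with `s(i) < t(i)`. -/
def IsSmooth (B : Set (List ℕ)) : Prop :=
  ∀ s ∈ B, ∀ t ∈ B, s.length < t.length →
    ∃ i, ∃ (hi : i < s.length) (hi' : i < t.length), s.get ⟨i, hi⟩ < t.get ⟨i, hi'⟩

/-- The tree `T(B)`: the closure of `B` under initial segments. -/
def TreeOf (B : Set (List ℕ)) : Set (List ℕ) := {s | ∃ t ∈ B, s <+: t}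

/-- The child relation on the tree `T(B)`: `t` is a one-point extension of `s` lying in `T(B)`. -/
def childRel (B : Set (List ℕ)) (t s : List ℕ) : Prop :=
  t ∈ TreeOf B ∧ ∃ n, t = s ++ [n]

/-- The height of the node `s` in the well-founded tree `T(B)`. -/
noncomputable def nodeHt (B : Set (List ℕ)) (h : WellFounded (childRel B)) (s : List ℕ) :
    Ordinal :=
  (h.apply s).rank

/-- The height `ht(B)` of the front `B`: the height of the tree `T(B)`. -/
noncomputable def htB (B : Set (List ℕ)) (h : WellFounded (childRel B)) : Ordinal :=
  nodeHt B h []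

/-- Every smooth block is a barrier: no element of `B` is a proper subset (as a set) of
another. -/
theorem smooth_block_is_barrier (B : Set (List ℕ)) (hB : IsBlock B) (hsm : IsSmooth B) :
    ∀ s ∈ B, ∀ t ∈ B, ¬ (s.toFinset ⊂ t.toFinset) := by
  intro s hs t ht hss
  have hsN := hB.sorted s hs
  have htN := hB.sorted t ht
  have hsub : ∀ x ∈ s, x ∈ t := by
    intro x hx
    have := hss.subset (List.mem_toFinset.mpr hx)
    simpa using this
  have hlen : s.length < t.length := by
    have hc := Finset.card_lt_card hss
    rwa [List.toFinset_card_of_nodup hsN.nodup, List.toFinset_card_of_nodup htN.nodup] at hc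
  obtain ⟨i, hi, hi', hlt⟩ := hsm s hs t ht hlen
  have hmap : ∀ j : Fin s.length, (j : ℕ) ≤ i →
      ∃ k : Fin t.length, (k : ℕ) < i ∧ t.get k = s.get j := by
    intro j hj
    have hmem : s.get j ∈ s := s.get_mem j
    obtain ⟨k, hk⟩ := List.mem_iff_get.mp (hsub _ hmem)
    refine ⟨k, ?_, hk⟩
    by_contra h
    push_neg at h
    have h1 : t.get ⟨i, hi'⟩ ≤ t.get k :=
      htN.sortedLT.strictMono_get.monotone (show (⟨i, hi'⟩ : Fin t.length) ≤ k from h)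
    have h2 : s.get j ≤ s.get ⟨i, hi⟩ :=
      hsN.sortedLT.strictMono_get.monotone (show j ≤ (⟨i, hi⟩ : Fin s.length) from hj)
    rw [hk] at h1
    omega
  have H := fun j : Fin (i + 1) => hmap ⟨(j : ℕ), by omega⟩ (Nat.lt_succ_iff.mp j.2)
  choose k hk1 hk2 using H
  have hginj : Function.Injective (fun j : Fin (i + 1) => (⟨(k j : ℕ), hk1 j⟩ : Fin i)) := by
    intro a b hab
    simp only [Fin.mk.injEq] at hab
    have hkk : k a = k b := Fin.ext hab
    have : t.get (k a) = t.get (k b) := by rw [hkk]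
    rw [hk2 a, hk2 b] at this
    have := hsN.sortedLT.strictMono_get.injective this
    exact Fin.ext (by simpa using congrArg Fin.val this)
  have := Fintype.card_le_of_injective _ hginj
  simp at this
end

section
/- If B is a smooth barrier then the order type of B under the lexicographic order equals ω^α if and only if the height of the well-founded tree T(B) of initial segments of elements of B equals α. -/
open Ordinal

section Basics
variable {B : Set (List ℕ)}

lemma tree_of_mem {s : List ℕ} (hs : s ∈ B) : s ∈ TreeOf B := ⟨s, hs, List.prefix_refl s⟩

lemma tree_sorted (hB : IsBlock B) {s : List ℕ} (hs : s ∈ TreeOf B) : s.Pairwise (· < ·) := by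
  obtain ⟨t, ht, hp⟩ := hs
  exact (hB.sorted t ht).sublist hp.sublist

lemma mem_sbase_of_tree {s : List ℕ} (hs : s ∈ TreeOf B) {n : ℕ} (hn : n ∈ s) : n ∈ sbase B := by
  obtain ⟨t, ht, hp⟩ := hs
  exact ⟨t, ht, hp.sublist.mem hn⟩

lemma not_mem_of_child (hB : IsBlock B) {s : List ℕ} {n : ℕ}
    (h : s ++ [n] ∈ TreeOf B) : s ∉ B := by
  obtain ⟨u, hu, hp⟩ := h
  intro hsB
  have hsu : s <+: u := (List.prefix_append s [n]).trans hp
  have := hB.prefix_free s hsB u hu hsu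
  subst this
  have := hp.length_le
  simp at this

lemma nodeHt_eq (hwf : WellFounded (childRel B)) (s : List ℕ) :
    nodeHt B hwf s = ⨆ b : { b // childRel B b s }, Order.succ (nodeHt B hwf b.1) := by
  rw [nodeHt, Acc.rank_eq]
  rfl

lemma leaf_no_child (hB : IsBlock B) {s t : List ℕ} (hs : s ∈ B) : ¬ childRel B t s := by
  rintro ⟨htT, n, rfl⟩
  exact not_mem_of_child hB htT hs

lemma nodeHt_leaf (hB : IsBlock B) (hwf : WellFounded (childRel B)) {s : List ℕ} (hs : s ∈ B) :
    nodeHt B hwf s = 0 := by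
  rw [nodeHt_eq]
  haveI : IsEmpty { b // childRel B b s } := ⟨fun b => leaf_no_child hB hs b.2⟩
  rw [ciSup_of_empty]
  rfl


section Extend
variable {B : Set (List ℕ)}

open Classical in
lemma extend_tree (hB : IsBlock B) {s : List ℕ} {n : ℕ} (hs : s ∈ TreeOf B) (hns : s ∉ B)
    (hn : n ∈ sbase B) (hlt : ∀ x ∈ s, x < n) : s ++ [n] ∈ TreeOf B := by
  classical
  set C : ℕ → Prop := fun m => m ∈ sbase B ∧ n < m with hC
  have hCinf : (setOf C).Infinite := by
    have : sbase B \ {m | m ≤ n} ⊆ setOf C := by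
      rintro m ⟨hm, hm2⟩
      exact ⟨hm, by simpa using hm2⟩
    exact ((hB.base_infinite.diff (Set.finite_Iic n)).mono this)
  set g : ℕ → ℕ := Nat.nth C with hg
  set f : ℕ → ℕ := fun i =>
    if h : i < s.length then s.get ⟨i, h⟩ else if i = s.length then n else g (i - s.length - 1)
    with hf
  have hfs : ∀ i (h : i < s.length), f i = s.get ⟨i, h⟩ := fun i h => dif_pos h
  have hfn : f s.length = n := by simp [hf]
  have hfg : ∀ j, f (s.length + 1 + j) = g j := by
    intro j
    have h1 : ¬ (s.length + 1 + j < s.length) := by omega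
    have h2 : ¬ (s.length + 1 + j = s.length) := by omega
    simp only [hf, dif_neg h1, if_neg h2]
    congr 1
    omega
  have hgC : ∀ j, C (g j) := fun j => Nat.nth_mem_of_infinite hCinf j
  have hmono : StrictMono f := by
    apply strictMono_nat_of_lt_succ
    intro i
    rcases lt_or_ge (i+1) s.length with h | h
    · rw [hfs i (by omega), hfs (i+1) h]
      exact List.pairwise_iff_get.1 (tree_sorted hB hs) ⟨i, by omega⟩ ⟨i+1, h⟩ (by simp)
    · rcases Nat.eq_or_lt_of_le h with h' | h'
      · have A : f (i+1) = n := by rw [← hfn]; congr 1; omega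
        rw [hfs i (by omega), A]
        exact hlt _ (List.get_mem _ _)
      · rcases Nat.eq_or_lt_of_le (Nat.lt_succ_iff.1 h') with h'' | h''
        · have A : f (i+1) = g 0 := by rw [← hfg]; congr 1; omega
          have A2 : f i = n := by rw [← hfn]; congr 1; omega
          rw [A, A2]
          exact (hgC 0).2
        · have A : f i = g (i - s.length - 1) := by rw [← hfg]; congr 1; omega
          have A2 : f (i+1) = g (i - s.length) := by rw [← hfg]; congr 1; omega
          rw [A, A2, hg, Nat.nth_lt_nth hCinf]
          omega
  have hfbase : ∀ i, f i ∈ sbase B := by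
    intro i
    rcases lt_or_ge i s.length with h | h
    · rw [hfs i h]; exact mem_sbase_of_tree hs (List.get_mem _ _)
    · rcases Nat.eq_or_lt_of_le h with h' | h'
      · rw [← h', hfn]; exact hn
      · have A : f i = g (i - s.length - 1) := by rw [← hfg]; congr 1; omega
        rw [A]; exact (hgC _).1
  obtain ⟨k, hk⟩ := hB.prefix_exists f hmono hfbase
  have hmap : ∀ m, m ≤ s.length → (List.range m).map f = s.take m := by
    intro m hm
    apply List.ext_get
    · simp [hm]
    · intro i h1 h2
      simp only [List.length_map, List.length_range] at h1
      simp only [List.get_eq_getElem, List.getElem_map]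
      simp only [List.getElem_range]
      rw [hfs i (by omega)]
      simp
  have hmapn : (List.range (s.length + 1)).map f = s ++ [n] := by
    rw [List.range_succ, List.map_append, hmap s.length le_rfl, List.take_length]
    simp [hfn]
  rcases le_or_gt k s.length with h | h
  · exfalso
    have hpk : (List.range k).map f <+: s := by
      rw [hmap k h]; exact List.take_prefix k s
    obtain ⟨u, hu, hsu⟩ := hs
    have hpu := hB.prefix_free _ hk u hu (hpk.trans hsu)
    rw [← hpu] at hsu
    have : (List.range k).map f = s :=
      hpk.eq_of_length (le_antisymm hpk.length_le hsu.length_le)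
    rw [this] at hk
    exact hns hk
  · refine ⟨(List.range k).map f, hk, ?_⟩
    rw [← hmapn]
    have : List.range (s.length + 1) = List.take (s.length + 1) (List.range k) := by
      rw [List.take_range, min_eq_left (by omega)]
    rw [this, List.map_take]
    exact List.take_prefix _ _

lemma nil_not_mem (hB : IsBlock B) : [] ∉ B := by
  intro h
  obtain ⟨n, s, hs, hns⟩ := hB.base_infinite.nonempty
  have : ([] : List ℕ) <+: s := List.nil_prefix
  have := hB.prefix_free [] h s hs this
  rw [← this] at hns
  simp at hns

lemma nil_mem_tree (hB : IsBlock B) : [] ∈ TreeOf B := by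
  have hCinf := hB.base_infinite
  classical
  set f : ℕ → ℕ := Nat.nth (· ∈ sbase B) with hf
  obtain ⟨k, hk⟩ := hB.prefix_exists f (Nat.nth_strictMono hCinf)
    (fun i => Nat.nth_mem_of_infinite hCinf i)
  exact ⟨_, hk, List.nil_prefix⟩

/-- Smoothness rules out a tree node pointwise below a leaf. -/
lemma smooth_no_below_leaf (hB : IsBlock B) (hsm : IsSmooth B) {s t : List ℕ}
    (hst : List.Forall₂ (· ≤ ·) s t) (ht : t ∈ B) (hsT : s ∈ TreeOf B) (hs : s ∉ B) : False := by
  obtain ⟨hlen, hget⟩ := List.forall₂_iff_get.1 hst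
  obtain ⟨u, hu, hsu⟩ := hsT
  have hne : s ≠ u := fun h => hs (h ▸ hu)
  have hlt : s.length < u.length := by
    rcases lt_or_eq_of_le hsu.length_le with h | h
    · exact h
    · exact absurd (hsu.eq_of_length h) hne
  obtain ⟨i, hi, hi', hlt2⟩ := hsm t ht u hu (hlen ▸ hlt)
  have : u.get ⟨i, hi'⟩ = s.get ⟨i, hlen ▸ hi⟩ := by
    have := hsu.getElem (i := i) (hlen ▸ hi)
    simpa [List.get_eq_getElem] using this.symm
  rw [this] at hlt2
  exact absurd (hget i (hlen ▸ hi) hi) (not_le.2 hlt2)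

lemma le_foldr_max {x : ℕ} : ∀ {t : List ℕ}, x ∈ t → x ≤ t.foldr max 0 := by
  intro t
  induction t with
  | nil => simp
  | cons c l ih =>
    intro hx
    rcases List.mem_cons.1 hx with rfl | hx'
    · simp [le_max_iff]
    · simp only [List.foldr_cons, le_max_iff]
      exact Or.inr (ih hx')

lemma rank_mono (hB : IsBlock B) (hsm : IsSmooth B) (hwf : WellFounded (childRel B)) :
    ∀ s, s ∈ TreeOf B → ∀ t ∈ TreeOf B, List.Forall₂ (· ≤ ·) s t →
      nodeHt B hwf s ≤ nodeHt B hwf t := by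
  intro s
  induction s using hwf.induction with
  | _ s IH =>
    intro hsT t htT hst
    rw [nodeHt_eq hwf s, Ordinal.iSup_le_iff]
    rintro ⟨b, hbT, a, rfl⟩
    -- s is internal
    have hsB : s ∉ B := not_mem_of_child hB hbT
    have htB : t ∉ B := fun h => smooth_no_below_leaf hB hsm hst h hsT hsB
    -- pick b' in base, ≥ a, above all of t
    obtain ⟨m, hm⟩ := (hB.base_infinite.diff (Set.finite_Iic (max a (t.foldr max 0)))).nonempty
    obtain ⟨hmbase, hmgt⟩ := hm
    simp only [Set.mem_setOf_eq, Set.mem_Iic, not_le, lt_max_iff] at hmgt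
    have hma : a ≤ m := le_of_lt (lt_of_le_of_lt (le_max_left _ _) hmgt)
    have hmt : ∀ x ∈ t, x < m :=
      fun x hx => lt_of_le_of_lt (le_foldr_max hx) (lt_of_le_of_lt (le_max_right _ _) hmgt)
    have htb : t ++ [m] ∈ TreeOf B := extend_tree hB htT htB hmbase hmt
    have hchild : childRel B (t ++ [m]) t := ⟨htb, m, rfl⟩
    have hle : nodeHt B hwf (s ++ [a]) ≤ nodeHt B hwf (t ++ [m]) := by
      apply IH _ ⟨hbT, a, rfl⟩ hbT _ htb
      exact List.rel_append hst (List.forall₂_cons.2 ⟨hma, List.Forall₂.nil⟩)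
    calc Order.succ (nodeHt B hwf (s ++ [a])) ≤ Order.succ (nodeHt B hwf (t ++ [m])) :=
          Order.succ_le_succ hle
      _ ≤ nodeHt B hwf t := by
          rw [nodeHt_eq hwf t]
          exact Ordinal.le_iSup (fun b : {b // childRel B b t} => Order.succ (nodeHt B hwf b.1))
            ⟨t ++ [m], hchild⟩

section OrdArith
variable {γ : Type*} (r : γ → γ → Prop) [IsWellOrder γ r]

instance subrelSetWO {δ : Type*} (r : δ → δ → Prop) [IsWellOrder δ r] (P : Set δ) :
    IsWellOrder (Subtype P) (Subrel r P) :=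
  inferInstanceAs (IsWellOrder (Subtype (· ∈ P)) (Subrel r (· ∈ P)))

lemma type_subset_le {P Q : Set γ} (h : P ⊆ Q) :
    Ordinal.type (Subrel r P) ≤ Ordinal.type (Subrel r Q) :=
  RelEmbedding.ordinal_type_le ⟨⟨Set.inclusion h, Set.inclusion_injective h⟩, Iff.rfl⟩

open Classical in
lemma type_union {P Q : Set γ} (h : ∀ p ∈ P, ∀ q ∈ Q, r p q) :
    Ordinal.type (Subrel r (P ∪ Q : Set γ)) = Ordinal.type (Subrel r P) + Ordinal.type (Subrel r Q) := by
  classical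
  rw [← type_sum_lex]
  refine Ordinal.type_eq.2 ⟨?_⟩
  refine ⟨⟨fun x => if hx : x.1 ∈ P then Sum.inl ⟨x.1, hx⟩ else Sum.inr ⟨x.1, x.2.resolve_left hx⟩,
    Sum.elim (fun p => ⟨p.1, Or.inl p.2⟩) (fun q => ⟨q.1, Or.inr q.2⟩), ?_, ?_⟩, ?_⟩
  · intro x
    by_cases hx : x.1 ∈ P
    · simp [hx]
    · simp [hx]
  · intro x
    rcases x with p | q
    · simp [p.2]
    · have hq : q.1 ∉ P := fun hp => (irrefl q.1) (h q.1 hp q.1 q.2)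
      simp [hq]
  · intro a b
    by_cases ha : a.1 ∈ P <;> by_cases hb : b.1 ∈ P
    · simp only [Equiv.coe_fn_mk, dif_pos ha, dif_pos hb, Sum.lex_inl_inl]
      exact Iff.rfl
    · simp only [Equiv.coe_fn_mk, dif_pos ha, dif_neg hb]
      constructor
      · intro _; exact h a.1 ha b.1 (b.2.resolve_left hb)
      · intro _; exact Sum.Lex.sep _ _
    · simp only [Equiv.coe_fn_mk, dif_neg ha, dif_pos hb]
      constructor
      · intro hab; exact absurd hab (by intro hc; cases hc)
      · intro hba
        exact absurd (IsTrans.trans _ _ _ hba (h b.1 hb a.1 (a.2.resolve_left ha))) (irrefl a.1)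
    · simp only [Equiv.coe_fn_mk, dif_neg ha, dif_neg hb, Sum.lex_inr_inr]
      exact Iff.rfl
end OrdArith

lemma lex_append_iff (l u v : List ℕ) :
    List.Lex (· < ·) (l ++ u) (l ++ v) ↔ List.Lex (· < ·) u v := by
  induction l with
  | nil => simp
  | cons a l ih => simpa [List.cons_append, List.lex_cons_iff] using ih

def lexB (B : Set (List ℕ)) : ↥B → ↥B → Prop := fun s t => List.Lex (· < ·) s.1 t.1

section Main
variable {B : Set (List ℕ)}

lemma type_ext_eq (hB : IsBlock B) (hsm : IsSmooth B) (hwf : WellFounded (childRel B))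
    (hwo : IsWellOrder ↥B (lexB B)) :
    ∀ s, s ∈ TreeOf B →
      Ordinal.type (Subrel (lexB B) {t : ↥B | s <+: t.1}) = omega0 ^ nodeHt B hwf s := by
  haveI := hwo
  intro s
  induction s using hwf.induction with
  | _ s IH =>
    intro hsT
    by_cases hsB : s ∈ B
    · -- leaf case
      have hset : {t : ↥B | s <+: t.1} = {⟨s, hsB⟩} := by
        ext t
        constructor
        · intro ht
          have := hB.prefix_free s hsB t.1 t.2 ht
          exact Subtype.ext this.symm
        · rintro rfl
          exact List.prefix_refl s
      rw [hset, nodeHt_leaf hB hwf hsB, opow_zero]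
      haveI : Unique (Subtype ({(⟨s, hsB⟩ : ↥B)} : Set ↥B)) := Set.uniqueSingleton _
      exact type_eq_one_of_unique _
    · -- internal case
      classical
      set C : ℕ → Prop := fun n => n ∈ sbase B ∧ ∀ x ∈ s, x < n with hCdef
      have hCinf : (setOf C).Infinite := by
        have hsub : sbase B \ Set.Iic (s.foldr max 0) ⊆ setOf C := by
          rintro n ⟨hn1, hn2⟩
          simp only [Set.mem_Iic, not_le] at hn2
          exact ⟨hn1, fun x hx => lt_of_le_of_lt (le_foldr_max hx) hn2⟩
        exact (hB.base_infinite.diff (Set.finite_Iic _)).mono hsub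
      set e : ℕ → ℕ := Nat.nth C with hedef
      have heC : ∀ k, C (e k) := fun k => Nat.nth_mem_of_infinite hCinf k
      have hemono : StrictMono e := Nat.nth_strictMono hCinf
      have hesurj : ∀ n, C n → ∃ k, e k = n := fun n hn => ⟨Nat.count C n, Nat.nth_count hn⟩
      have hchild : ∀ k, childRel B (s ++ [e k]) s :=
        fun k => ⟨extend_tree hB hsT hsB (heC k).1 (heC k).2, _, rfl⟩
      -- C characterizes children
      have hCchar : ∀ n : ℕ, s ++ [n] ∈ TreeOf B → C n := by
        intro n hn
        refine ⟨mem_sbase_of_tree hn (by simp), ?_⟩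
        have hsort := tree_sorted hB hn
        rw [List.pairwise_append] at hsort
        intro x hx
        exact hsort.2.2 x hx n (by simp)
      have hdecomp : ∀ t : ↥B, s <+: t.1 → ∃ k rest, t.1 = s ++ e k :: rest := by
        rintro t ⟨rest, hrest⟩
        match rest, hrest with
        | [], hrest => exact absurd ((by simpa using hrest) ▸ t.2 : s ∈ B) hsB
        | n :: rest', hrest =>
          have hnT : s ++ [n] ∈ TreeOf B :=
            ⟨t.1, t.2, ⟨rest', by rw [← hrest]; simp⟩⟩
          obtain ⟨k, hk⟩ := hesurj n (hCchar n hnT)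
          exact ⟨k, rest', by rw [← hrest, hk]⟩
      set α : ℕ → Ordinal := fun k => nodeHt B hwf (s ++ [e k]) with hαdef
      have hαmono : ∀ j k, j ≤ k → α j ≤ α k := by
        intro j k hjk
        apply rank_mono hB hsm hwf _ (hchild j).1 _ (hchild k).1
        exact List.rel_append (List.forall₂_refl s)
          (List.forall₂_cons.2 ⟨hemono.monotone hjk, List.Forall₂.nil⟩)
      have hht : nodeHt B hwf s = ⨆ k, Order.succ (α k) := by
        apply le_antisymm
        · rw [nodeHt_eq hwf s, Ordinal.iSup_le_iff]
          rintro ⟨b, hbT, n, rfl⟩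
          obtain ⟨k, hk⟩ := hesurj n (hCchar n hbT)
          have hα : α k = nodeHt B hwf (s ++ [n]) := by simp only [hαdef]; rw [hk]
          calc Order.succ (nodeHt B hwf (s ++ [n])) = Order.succ (α k) := by rw [hα]
            _ ≤ ⨆ k, Order.succ (α k) := Ordinal.le_iSup (fun k => Order.succ (α k)) k
        · rw [Ordinal.iSup_le_iff]
          intro k
          rw [nodeHt_eq hwf s]
          exact Ordinal.le_iSup (fun b : {b // childRel B b s} => Order.succ (nodeHt B hwf b.1))
            ⟨s ++ [e k], hchild k⟩
      set X : Set ↥B := {t : ↥B | s <+: t.1} with hXdef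
      set Xk : ℕ → Set ↥B := fun k => {t : ↥B | s ++ [e k] <+: t.1} with hXkdef
      have hIH : ∀ k, Ordinal.type (Subrel (lexB B) (Xk k)) = omega0 ^ α k :=
        fun k => IH (s ++ [e k]) (hchild k) (hchild k).1
      have hblk : ∀ j k, j < k → ∀ u ∈ Xk j, ∀ v ∈ Xk k, lexB B u v := by
        intro j k hjk u hu v hv
        obtain ⟨u', hu'⟩ := hu
        obtain ⟨v', hv'⟩ := hv
        show List.Lex (· < ·) u.1 v.1
        rw [← hu', ← hv', List.append_assoc, List.append_assoc, lex_append_iff]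
        exact List.Lex.rel (hemono hjk)
      have hXksub : ∀ k, Xk k ⊆ X := by
        intro k t ht
        exact (List.prefix_append s [e k]).trans ht
      -- upper bound pieces
      set Y : ℕ → Set ↥B := fun k => {t : ↥B | ∃ j ≤ k, s ++ [e j] <+: t.1} with hYdef
      have hY0 : Y 0 = Xk 0 := by
        ext t; simp [hYdef, hXkdef, Nat.le_zero]
      have hYsucc : ∀ k, Y (k + 1) = Y k ∪ Xk (k + 1) := by
        intro k
        ext t
        simp only [hYdef, hXkdef, Set.mem_setOf_eq, Set.mem_union]
        constructor
        · rintro ⟨j, hj, hp⟩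
          rcases Nat.le_succ_iff.1 hj with h | rfl
          · exact Or.inl ⟨j, h, hp⟩
          · exact Or.inr hp
        · rintro (⟨j, hj, hp⟩ | hp)
          · exact ⟨j, hj.trans (Nat.le_succ k), hp⟩
          · exact ⟨k + 1, le_rfl, hp⟩
      have hYtype : ∀ k, Ordinal.type (Subrel (lexB B) (Y k)) ≤ omega0 ^ α k * (k + 1 : ℕ) := by
        intro k
        induction k with
        | zero => rw [hY0, hIH 0]; simpa using le_rfl
        | succ k ihk =>
          rw [hYsucc k, type_union (lexB B) ?ord, hIH (k+1)]
          case ord =>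
            rintro u ⟨j, hj, hu⟩ v hv
            exact hblk j (k+1) (Nat.lt_succ_of_le hj) u hu v hv
          calc Ordinal.type (Subrel (lexB B) (Y k)) + omega0 ^ α (k+1)
              ≤ omega0 ^ α k * (k + 1 : ℕ) + omega0 ^ α (k+1) := add_le_add_left ihk _
            _ ≤ omega0 ^ α (k+1) * (k + 1 : ℕ) + omega0 ^ α (k+1) := by
                refine add_le_add_left (mul_le_mul_left ?_ _) _
                exact opow_le_opow_right omega0_pos (hαmono k (k+1) (Nat.le_succ k))
            _ = omega0 ^ α (k+1) * (k + 2 : ℕ) := by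
                rw [← mul_add_one]
                norm_cast
      -- lower bound pieces
      set Z : ℕ → ℕ → Set ↥B := fun k n => {t : ↥B | ∃ j, k ≤ j ∧ j < k + n ∧ s ++ [e j] <+: t.1}
        with hZdef
      have hZsucc : ∀ k n, Z k (n + 1) = Z k n ∪ Xk (k + n) := by
        intro k n
        ext t
        simp only [hZdef, hXkdef, Set.mem_setOf_eq, Set.mem_union]
        constructor
        · rintro ⟨j, hj1, hj2, hp⟩
          rcases Nat.lt_succ_iff_lt_or_eq.1 (by omega : j < (k + n) + 1) with h | rfl
          · exact Or.inl ⟨j, hj1, h, hp⟩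
          · exact Or.inr hp
        · rintro (⟨j, hj1, hj2, hp⟩ | hp)
          · exact ⟨j, hj1, by omega, hp⟩
          · exact ⟨k + n, by omega, by omega, hp⟩
      have hZtype : ∀ k n, omega0 ^ α k * (n : ℕ) ≤ Ordinal.type (Subrel (lexB B) (Z k n)) := by
        intro k n
        induction n with
        | zero => simp
        | succ n ihn =>
          rw [hZsucc k n, type_union (lexB B) ?ord2, hIH (k+n)]
          case ord2 =>
            rintro u ⟨j, hj1, hj2, hu⟩ v hv
            exact hblk j (k+n) hj2 u hu v hv
          calc omega0 ^ α k * ((n + 1 : ℕ) : Ordinal)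
              = omega0 ^ α k * (n : ℕ) + omega0 ^ α k := by
                rw [← mul_add_one]; norm_cast
            _ ≤ Ordinal.type (Subrel (lexB B) (Z k n)) + omega0 ^ α (k + n) :=
                add_le_add ihn (opow_le_opow_right omega0_pos (hαmono k (k+n) (by omega)))
      have hZsub : ∀ k n, Z k n ⊆ X := by
        rintro k n t ⟨j, _, _, hp⟩
        exact (List.prefix_append s [e j]).trans hp
      -- lower bound
      have hlb : omega0 ^ nodeHt B hwf s ≤ Ordinal.type (Subrel (lexB B) X) := by
        rw [hht, (isNormal_opow one_lt_omega0).map_iSup (Ordinal.bddAbove_range _), Ordinal.iSup_le_iff]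
        intro k
        rw [opow_succ, mul_le_iff_of_isSuccLimit isSuccLimit_omega0]
        intro b hb
        obtain ⟨n, rfl⟩ := lt_omega0.1 hb
        exact le_trans (le_of_le_of_eq (hZtype k n) rfl) <|
          le_trans (type_subset_le (lexB B) (hZsub k n)) le_rfl
      -- upper bound
      have hub : Ordinal.type (Subrel (lexB B) X) ≤ omega0 ^ nodeHt B hwf s := by
        refine le_of_not_gt fun hlt => ?_
        obtain ⟨t, ht⟩ := typein_surj (Subrel (lexB B) X) hlt
        obtain ⟨k, rest, hk⟩ := hdecomp t.1 t.2
        have hemb : typein (Subrel (lexB B) X) t ≤ Ordinal.type (Subrel (lexB B) (Y k)) := by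
          rw [← type_subrel]
          refine RelEmbedding.ordinal_type_le ⟨⟨fun u => ⟨u.1.1, ?_⟩, ?_⟩, ?_⟩
          · -- u.1.1 ∈ Y k
            obtain ⟨j, rest', hj⟩ := hdecomp u.1.1 u.1.2
            refine ⟨j, ?_, ⟨rest', by rw [hj]; simp⟩⟩
            by_contra hjk
            push_neg at hjk
            have h1 : lexB B t.1 u.1.1 := by
              apply hblk k j hjk t.1 ⟨rest, by rw [hk]; simp⟩ u.1.1 ⟨rest', by rw [hj]; simp⟩
            have h2 : lexB B u.1.1 t.1 := u.2
            exact (irrefl (r := lexB B) u.1.1) (IsTrans.trans _ _ _ h2 h1)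
          · intro u v huv
            simp only [Subtype.mk.injEq] at huv
            apply Subtype.ext
            apply Subtype.ext
            exact Subtype.mk.inj huv
          · exact Iff.rfl
        have hfin : typein (Subrel (lexB B) X) t < omega0 ^ nodeHt B hwf s := by
          refine lt_of_le_of_lt (hemb.trans (hYtype k)) ?_
          calc omega0 ^ α k * (k + 1 : ℕ)
              < omega0 ^ α k * omega0 :=
                mul_lt_mul_of_pos_left (nat_lt_omega0 (k+1)) (opow_pos _ omega0_pos)
            _ = omega0 ^ Order.succ (α k) := (opow_succ _ _).symm
            _ ≤ omega0 ^ nodeHt B hwf s := by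
                rw [hht]
                exact opow_le_opow_right omega0_pos
                  (Ordinal.le_iSup (fun k => Order.succ (α k)) k)
        rw [ht] at hfin
        exact lt_irrefl _ hfin
      exact le_antisymm hub hlb
end Main


/-- For a smooth barrier `B`, the order type of `B` under the lexicographic order is `ω^α`
if and only if the height of the tree `T(B)` is `α`. -/
theorem smooth_barrier_type_eq_opow_iff_ht (B : Set (List ℕ))
    (hB : IsBlock B) (hsm : IsSmooth B)
    (hwf : WellFounded (childRel B))
    (hwo : IsWellOrder B fun s t : B => List.Lex (· < ·) s.1 t.1) (α : Ordinal) :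
    @Ordinal.type B (fun s t : B => List.Lex (· < ·) s.1 t.1) hwo = omega0 ^ α ↔
      htB B hwf = α := by
  have hwo' : IsWellOrder ↥B (lexB B) := hwo
  haveI := hwo'
  have key : @Ordinal.type B (fun s t : B => List.Lex (· < ·) s.1 t.1) hwo
      = omega0 ^ htB B hwf := by
    have h0 : {t : ↥B | [] <+: t.1} = Set.univ := by
      ext t; simp
    have hmain := type_ext_eq hB hsm hwf hwo' [] (nil_mem_tree hB)
    rw [h0] at hmain
    have huniv : Ordinal.type (Subrel (lexB B) Set.univ) = Ordinal.type (lexB B) :=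
      Ordinal.type_eq.2 ⟨⟨Equiv.Set.univ _, fun {a b} => Iff.rfl⟩⟩
    rw [huniv] at hmain
    exact hmain
  constructor
  · intro h
    exact (isNormal_opow one_lt_omega0).strictMono.injective (key.symm.trans h)
  · intro h
    rw [← h]
    exact key
end Extend
end Basics
end

section
/- If B is a smooth barrier and X is a final segment of base(B), then ht(B) = ht(B↾X), where B↾X = {s ∈ B : s ⊆ X}. -/
open Ordinal

-- aux: rank monotone under subrelation
theorem rank_le_of_subrel {α : Type*} {r r' : α → α → Prop} (hsub : ∀ a b, r' a b → r a b)
    (h1 : WellFounded r) (h2 : WellFounded r') (a : α) :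
    (h2.apply a).rank ≤ (h1.apply a).rank := by
  induction a using h1.induction with
  | _ a ih =>
    rw [Acc.rank_eq]
    apply Ordinal.iSup_le
    rintro ⟨b, hb⟩
    rw [Order.succ_le_iff]
    have e1 : ((h2.apply a).inv hb).rank = (h2.apply b).rank := rfl
    have e2 : (h1.apply b).rank = ((h1.apply a).inv (hsub b a hb)).rank := rfl
    rw [e1]
    exact (ih b (hsub b a hb)).trans_lt (e2 ▸ Acc.rank_lt_of_rel _ (hsub b a hb))

-- maximum bound helper
theorem mem_le_foldr_max (t : List ℕ) : ∀ x ∈ t, x ≤ t.foldr max 0 := by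
  induction t with
  | nil => simp
  | cons a l ih =>
    intro x hx
    rcases List.mem_cons.1 hx with rfl | hx
    · simp only [List.foldr_cons]; omega
    · have := ih x hx
      simp only [List.foldr_cons]
      omega

theorem shift_mem (B : Set (List ℕ)) (hB : IsBlock B) (hsm : IsSmooth B) (m : ℕ)
    (s t : List ℕ) (hsT : s ∈ TreeOf B)
    (hts : t.Pairwise (· < ·)) (htX : ∀ x ∈ t, x ∈ sbase B ∧ m ≤ x)
    (hlen : t.length = s.length)
    (hpt : ∀ i (hi : i < s.length) (hi' : i < t.length), s.get ⟨i, hi⟩ ≤ t.get ⟨i, hi'⟩) :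
    t ∈ TreeOf {u ∈ B | ∀ x ∈ u, x ∈ sbase B ∧ m ≤ x} := by
  set M := t.foldr max 0 with hM
  set p : ℕ → Prop := fun x => x ∈ sbase B ∧ m ≤ x ∧ M < x with hp
  have hpinf : (setOf p).Infinite := by
    apply Set.infinite_of_forall_exists_gt
    intro a
    obtain ⟨b, hbB, hb⟩ := hB.base_infinite.exists_gt (max a (max m M))
    exact ⟨b, ⟨hbB, by omega, by omega⟩, by omega⟩
  set f : ℕ → ℕ := fun i => if h : i < t.length then t.get ⟨i, h⟩ else Nat.nth p (i - t.length)
    with hf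
  have hfeq : ∀ i (h : i < t.length), f i = t.get ⟨i, h⟩ := fun i h => dif_pos h
  have hfmem : ∀ i, f i ∈ sbase B := by
    intro i
    by_cases h : i < t.length
    · rw [hfeq i h]; exact (htX _ (t.get_mem _)).1
    · rw [hf]; simp only [dif_neg h]
      exact (Nat.nth_mem_of_infinite hpinf _).1
  have hfm : ∀ i, m ≤ f i := by
    intro i
    by_cases h : i < t.length
    · rw [hfeq i h]; exact (htX _ (t.get_mem _)).2
    · show m ≤ f i; rw [hf]; simp only [dif_neg h]
      exact (Nat.nth_mem_of_infinite hpinf _).2.1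
  have hmono : StrictMono f := by
    intro i j hij
    rcases lt_or_ge j t.length with hj | hj
    · rw [hfeq i (hij.trans hj), hfeq j hj]
      exact (List.Pairwise.sortedLT hts).strictMono_get (by exact hij)
    · rcases lt_or_ge i t.length with hi | hi
      · rw [hfeq i hi, hf]
        simp only [dif_neg (not_lt.2 hj)]
        have h1 : t.get ⟨i, hi⟩ ≤ M := mem_le_foldr_max t _ (t.get_mem _)
        have h2 : M < Nat.nth p (j - t.length) := (Nat.nth_mem_of_infinite hpinf _).2.2
        omega
      · rw [hf]
        simp only [dif_neg (not_lt.2 hi), dif_neg (not_lt.2 hj)]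
        exact Nat.nth_strictMono hpinf (by omega)
  obtain ⟨k, hk⟩ := hB.prefix_exists f hmono hfmem
  have hulen : ((List.range k).map f).length = k := by simp
  rcases le_or_gt t.length k with hkt | hkt
  · -- t is a prefix of the found element, which lies in B'
    refine ⟨(List.range k).map f, ⟨hk, ?_⟩, ?_⟩
    · intro x hx
      obtain ⟨i, _, rfl⟩ := List.mem_map.1 hx
      exact ⟨hfmem i, hfm i⟩
    · have ht' : t = ((List.range k).map f).take t.length := by
        apply List.ext_get
        · simp [hkt]
        · intro i h1 h2
          have hik : i < k := lt_of_lt_of_le h1 hkt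
          simp only [List.get_eq_getElem, List.getElem_take, List.getElem_map,
            List.getElem_range]
          exact (hfeq i h1).symm
      rw [ht']
      exact List.take_prefix _ _
  · -- contradiction with smoothness
    exfalso
    obtain ⟨v, hvB, hsv⟩ := hsT
    have hlenv : ((List.range k).map f).length < v.length := by
      rw [hulen]
      exact lt_of_lt_of_le (hkt.trans_le hlen.le) hsv.length_le
    obtain ⟨i, hi, hi', hlt⟩ := hsm _ hk v hvB hlenv
    rw [hulen] at hi
    have his : i < s.length := by omega
    have hit : i < t.length := by omega
    have e1 : ((List.range k).map f).get ⟨i, by simpa [hulen] using hi⟩ = t.get ⟨i, hit⟩ := by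
      simp only [List.get_eq_getElem, List.getElem_map, List.getElem_range]
      exact hfeq i hit
    have e2 : v.get ⟨i, hi'⟩ = s.get ⟨i, his⟩ := by
      simp only [List.get_eq_getElem]
      exact (hsv.getElem his).symm
    have := hpt i his hit
    rw [e1, e2] at hlt
    omega

theorem key_rank_le (B : Set (List ℕ)) (hB : IsBlock B) (hsm : IsSmooth B) (m : ℕ)
    (hwf : WellFounded (childRel B))
    (hwf' : WellFounded (childRel {s ∈ B | ∀ x ∈ s, x ∈ sbase B ∧ m ≤ x})) :
    ∀ s t : List ℕ, t.Pairwise (· < ·) → (∀ x ∈ t, x ∈ sbase B ∧ m ≤ x) →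
      t.length = s.length →
      (∀ i (hi : i < s.length) (hi' : i < t.length), s.get ⟨i, hi⟩ ≤ t.get ⟨i, hi'⟩) →
      (hwf.apply s).rank ≤ (hwf'.apply t).rank := by
  intro s
  induction s using hwf.induction with
  | _ s ih =>
    intro t hts htX hlen hpt
    rw [Acc.rank_eq]
    apply Ordinal.iSup_le
    rintro ⟨c, hc⟩
    obtain ⟨hcT, n, rfl⟩ := hc
    rw [Order.succ_le_iff]
    -- choose n'
    obtain ⟨n', hn'B, hn'⟩ := hB.base_infinite.exists_gt (max (max m n) (t.foldr max 0))
    have hn'm : m ≤ n' := by omega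
    have hn'n : n ≤ n' := by omega
    have hn't : ∀ x ∈ t, x < n' := fun x hx => lt_of_le_of_lt (mem_le_foldr_max t x hx) (by omega)
    set t' := t ++ [n'] with ht'
    have ht's : t'.Pairwise (· < ·) := by
      rw [ht']
      exact List.pairwise_append.2 ⟨hts, List.pairwise_singleton _ _, fun a ha b hb => by
        rw [List.mem_singleton.1 hb]; exact hn't a ha⟩
    have ht'X : ∀ x ∈ t', x ∈ sbase B ∧ m ≤ x := by
      intro x hx
      rcases List.mem_append.1 hx with hx | hx
      · exact htX x hx
      · rw [List.mem_singleton.1 hx]; exact ⟨hn'B, hn'm⟩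
    have hlen' : t'.length = (s ++ [n]).length := by simp [ht', hlen]
    have hpt' : ∀ i (hi : i < (s ++ [n]).length) (hi' : i < t'.length),
        (s ++ [n]).get ⟨i, hi⟩ ≤ t'.get ⟨i, hi'⟩ := by
      intro i hi hi'
      simp only [List.get_eq_getElem]
      rcases lt_or_ge i s.length with his | his
      · rw [List.getElem_append_left his, List.getElem_append_left (hlen ▸ his)]
        exact hpt i his (hlen ▸ his)
      · have hie : i = s.length := by simp at hi; omega
        subst hie
        rw [List.getElem_append_right (le_refl s.length)]
        show [n][s.length - s.length] ≤ (t ++ [n'])[s.length]'(by simp [hlen])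
        rw [List.getElem_append_right (by omega)]
        simpa [hlen] using hn'n
    have hmem := shift_mem B hB hsm m (s ++ [n]) t' hcT ht's ht'X hlen' hpt'
    have hrel : childRel {u ∈ B | ∀ x ∈ u, x ∈ sbase B ∧ m ≤ x} t' t := ⟨hmem, n', rfl⟩
    have h2 : (hwf.apply (s ++ [n])).rank ≤ (hwf'.apply t').rank :=
      ih _ ⟨hcT, n, rfl⟩ t' ht's ht'X hlen' hpt'
    have e1 : ((hwf.apply s).inv (⟨hcT, n, rfl⟩ : childRel B (s ++ [n]) s)).rank
        = (hwf.apply (s ++ [n])).rank := rfl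
    have e2 : (hwf'.apply t').rank = ((hwf'.apply t).inv hrel).rank := rfl
    have h3 : (hwf.apply (s ++ [n])).rank < (hwf'.apply t).rank :=
      h2.trans_lt (e2 ▸ Acc.rank_lt_of_rel _ hrel)
    exact lt_of_eq_of_lt e1 h3

/-- If `B` is a smooth barrier and `X = {n ∈ base(B) : m ≤ n}` is a final segment of its base,
then `ht(B) = ht(B↾X)` where `B↾X = {s ∈ B : s ⊆ X}`. -/
theorem smooth_barrier_ht_restrict (B : Set (List ℕ)) (hB : IsBlock B) (hsm : IsSmooth B)
    (m : ℕ)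
    (hwf : WellFounded (childRel B))
    (hwf' : WellFounded (childRel {s ∈ B | ∀ x ∈ s, x ∈ sbase B ∧ m ≤ x})) :
    htB B hwf = htB {s ∈ B | ∀ x ∈ s, x ∈ sbase B ∧ m ≤ x} hwf' := by
  apply le_antisymm
  · exact key_rank_le B hB hsm m hwf hwf' [] [] List.Pairwise.nil (by simp) rfl
      (by intro i hi; simp at hi)
  · refine rank_le_of_subrel (fun a b hab => ?_) hwf hwf' []
    obtain ⟨⟨u, hu, hp⟩, hn⟩ := hab
    exact ⟨⟨u, hu.1, hp⟩, hn⟩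
end

section
/- Let α, β be ordinals with α = sup_n α_n and β = sup_n β_n. Then the natural (Hessenberg) sum satisfies α # β = max( sup_n (α_n # β), sup_n (α # β_n) ). -/
open Ordinal

universe u

namespace Ordinal

/-- Natural addition on ordinals `a ♯ b` (definition of the former `Mathlib.SetTheory.Ordinal.NaturalOps`). -/
noncomputable def nadd : Ordinal.{u} → Ordinal.{u} → Ordinal.{u}
  | a, b =>
    max (blsub.{u, u} a fun a' _ => nadd a' b) (blsub.{u, u} b fun b' _ => nadd a b')
termination_by a b => (a, b)
decreasing_by
  all_goals first
    | exact Prod.Lex.left _ _ (by assumption)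
    | exact Prod.Lex.right _ (by assumption)

end Ordinal

namespace NaturalOps

scoped infixl:65 " ♯ " => Ordinal.nadd

end NaturalOps

open scoped NaturalOps

namespace Ordinal

theorem nadd_def' (a b : Ordinal.{u}) : a ♯ b =
    max (blsub.{u, u} a fun a' _ => a' ♯ b) (blsub.{u, u} b fun b' _ => a ♯ b') := by
  rw [nadd]

theorem lt_nadd_iff' {a b c : Ordinal.{u}} :
    a < b ♯ c ↔ (∃ b' < b, a ≤ b' ♯ c) ∨ ∃ c' < c, a ≤ b ♯ c' := by
  rw [nadd_def']
  simp [lt_blsub_iff]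

theorem nadd_le_iff {a b c : Ordinal.{u}} :
    b ♯ c ≤ a ↔ (∀ b' < b, b' ♯ c < a) ∧ ∀ c' < c, b ♯ c' < a := by
  rw [nadd_def']
  simp [blsub_le_iff]

theorem nadd_lt_nadd_left {b c : Ordinal.{u}} (h : b < c) (a : Ordinal.{u}) : a ♯ b < a ♯ c :=
  lt_nadd_iff'.2 (Or.inr ⟨b, h, le_rfl⟩)

theorem nadd_lt_nadd_right {b c : Ordinal.{u}} (h : b < c) (a : Ordinal.{u}) : b ♯ a < c ♯ a :=
  lt_nadd_iff'.2 (Or.inl ⟨b, h, le_rfl⟩)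

theorem nadd_le_nadd_left {b c : Ordinal.{u}} (h : b ≤ c) (a : Ordinal.{u}) : a ♯ b ≤ a ♯ c := by
  rcases h.lt_or_eq with h | h
  · exact (nadd_lt_nadd_left h a).le
  · rw [h]

theorem nadd_le_nadd_right {b c : Ordinal.{u}} (h : b ≤ c) (a : Ordinal.{u}) : b ♯ a ≤ c ♯ a := by
  rcases h.lt_or_eq with h | h
  · exact (nadd_lt_nadd_right h a).le
  · rw [h]

end Ordinal


/-- If `α = sup_n α_n` and `β = sup_n β_n`, then the natural (Hessenberg) sum satisfies
`α ♯ β = max (sup_n (α_n ♯ β)) (sup_n (α ♯ β_n))`. -/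
theorem nadd_sup_eq (a b : ℕ → Ordinal) (α β : Ordinal)
    (hα : α = ⨆ n, a n) (hβ : β = ⨆ n, b n) :
    α ♯ β = max (⨆ n, a n ♯ β) (⨆ n, α ♯ b n) := by
  apply le_antisymm
  · rw [nadd_le_iff]
    constructor
    · intro a' ha'
      rw [hα, Ordinal.lt_iSup_iff] at ha'
      obtain ⟨n, hn⟩ := ha'
      exact lt_max_of_lt_left <| lt_of_lt_of_le (nadd_lt_nadd_right hn β)
        (Ordinal.le_iSup (fun n => a n ♯ β) n)
    · intro b' hb'
      rw [hβ, Ordinal.lt_iSup_iff] at hb'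
      obtain ⟨n, hn⟩ := hb'
      exact lt_max_of_lt_right <| lt_of_lt_of_le (nadd_lt_nadd_left hn α)
        (Ordinal.le_iSup (fun n => α ♯ b n) n)
  · apply max_le
    · exact Ordinal.iSup_le fun n => nadd_le_nadd_right (hα ▸ Ordinal.le_iSup a n) β
    · exact Ordinal.iSup_le fun n => nadd_le_nadd_left (hβ ▸ Ordinal.le_iSup b n) α
end
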